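/- Let p, q₀ ∈ S_n with q₀ ≠ p, and define the dual loss L*_p(η) = D(p(η)‖p) for η ∈ Δ_n, where p(η) ∈ S_n is the distribution with η coordinates η. Let η : [0, ∞) → Δ_n be differentiable with η(0) = η_{q₀} and η'(t) = −∇L*_p(η(t)) for all t ≥ 0. Then there exist constants 1 < m ≤ L and c > 0 such that c·e^{−2Lt} ≤ L*_p(η(t)) ≤ c·e^{−2mt} ≤ c·e^{−2t} for all t ≥ 0; i.e., L*_p(η(t)) converges to zero exponentially with rate higher than 2. -/

import Mathlib

set_option maxHeartbeats 1000000


open Filter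

noncomputable section

abbrev E (n : ℕ) := EuclideanSpace ℝ (Fin n)

/-- The open probability simplex `S_n` inside `ℝ^{n+1}`. -/
def simplex (n : ℕ) : Set (Fin (n+1) → ℝ) :=
  {p | (∀ i, 0 < p i) ∧ ∑ i, p i = 1}

/-- The mixture (`η`) coordinate domain `Δ_n`. -/
def Δset (n : ℕ) : Set (E n) := {η | (∀ i, 0 < η i) ∧ ∑ i, η i < 1}

/-- The distribution in `S_n` corresponding to `η` coordinates. -/
def mixDist {n : ℕ} (η : E n) : Fin (n+1) → ℝ :=
  Fin.snoc (fun i => η i) (1 - ∑ i, η i)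

/-- The distribution in `S_n` corresponding to `θ` coordinates. -/
def expDist {n : ℕ} (θ : E n) : Fin (n+1) → ℝ :=
  Fin.snoc (fun i => Real.exp (θ i) / (1 + ∑ j, Real.exp (θ j)))
    (1 / (1 + ∑ j, Real.exp (θ j)))

/-- The `η` coordinates of a distribution `q ∈ S_n`. -/
def etaCoord {n : ℕ} (q : Fin (n+1) → ℝ) : E n := WithLp.toLp 2 (fun i : Fin n => q i.castSucc)

/-- The `θ` coordinates of a distribution `q ∈ S_n`. -/
def thetaCoord {n : ℕ} (q : Fin (n+1) → ℝ) : E n :=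
  WithLp.toLp 2 (fun i : Fin n => Real.log (q i.castSucc / q (Fin.last n)))

/-- Kullback–Leibler divergence `D(q‖p)`. -/
def KL {n : ℕ} (q p : Fin (n+1) → ℝ) : ℝ := ∑ i, q i * Real.log (q i / p i)

/-- Log-partition function `ψ(θ) = log(1 + Σ e^{θ_i})`. -/
def psi {n : ℕ} (θ : E n) : ℝ := Real.log (1 + ∑ i, Real.exp (θ i))

/-- Negative entropy `φ(η)`. -/
def phi {n : ℕ} (η : E n) : ℝ :=
  (∑ i, η i * Real.log (η i)) + (1 - ∑ i, η i) * Real.log (1 - ∑ i, η i)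

/-- The loss `L_q` in `η` coordinates: `η ↦ D(q ‖ p(η))`. -/
def Leta {n : ℕ} (q : Fin (n+1) → ℝ) (η : E n) : ℝ := KL q (mixDist η)

/-- The loss `L_q` in `θ` coordinates: `θ ↦ D(q ‖ p(θ))`. -/
def Ltheta {n : ℕ} (q : Fin (n+1) → ℝ) (θ : E n) : ℝ := KL q (expDist θ)

/-- The Hessian of `f : ℝⁿ → ℝ` at `x`, as the `n × n` matrix of second partial
derivatives. -/
def hess {n : ℕ} (f : E n → ℝ) (x : E n) : Matrix (Fin n) (Fin n) ℝ :=
  Matrix.of fun i j =>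
    fderiv ℝ (fun y => fderiv ℝ f y (EuclideanSpace.single j 1)) x (EuclideanSpace.single i 1)

/-- The set of (real) eigenvalues of a matrix. -/
def lamSet {n : ℕ} (A : Matrix (Fin n) (Fin n) ℝ) : Set ℝ :=
  {μ | ∃ v : Fin n → ℝ, v ≠ 0 ∧ A.mulVec v = μ • v}

/-- Largest eigenvalue `λ_max`. -/
def lamMax {n : ℕ} (A : Matrix (Fin n) (Fin n) ℝ) : ℝ := sSup (lamSet A)

/-- Smallest eigenvalue `λ_min`. -/
def lamMin {n : ℕ} (A : Matrix (Fin n) (Fin n) ℝ) : ℝ := sInf (lamSet A)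

/-- Condition number `cond(A) = λ_max(A)/λ_min(A)`. -/
def condNum {n : ℕ} (A : Matrix (Fin n) (Fin n) ℝ) : ℝ := lamMax A / lamMin A

/-- Operator 2-norm of a matrix (induced by the Euclidean norm). -/
def opNorm {n : ℕ} (A : Matrix (Fin n) (Fin n) ℝ) : ℝ :=
  ‖Matrix.toEuclideanCLM (𝕜 := ℝ) A‖


/-- The dual loss `L*_p(η) = D(p(η)‖p)` in `η` coordinates. -/
def Lstar {n : ℕ} (p : Fin (n+1) → ℝ) (η : E n) : ℝ := KL (mixDist η) p

namespace Aux18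
open Real Set Finset

variable {n : ℕ}


lemma sum_eta {q : Fin (n+1) → ℝ} (hq : q ∈ simplex n) :
    ∑ i : Fin n, q i.castSucc = 1 - q (Fin.last n) := by
  have := hq.2
  rw [Fin.sum_univ_castSucc] at this
  linarith

lemma mixDist_etaCoord {q : Fin (n+1) → ℝ} (hq : q ∈ simplex n) :
    mixDist (etaCoord q) = q := by
  funext j
  refine Fin.lastCases ?_ ?_ j
  · simp [mixDist, etaCoord, Fin.snoc_last, sum_eta hq]
  · intro i; simp [mixDist, etaCoord]

lemma etaCoord_mem {q : Fin (n+1) → ℝ} (hq : q ∈ simplex n) :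
    etaCoord q ∈ Δset n := by
  refine ⟨fun i => hq.1 _, ?_⟩
  have h := sum_eta hq
  have := hq.1 (Fin.last n)
  simp only [etaCoord]
  rw [h]; linarith

lemma mixDist_pos {x : E n} (hx : x ∈ Δset n) : ∀ j, 0 < mixDist x j := by
  intro j
  refine Fin.lastCases ?_ ?_ j
  · simp [mixDist]; linarith [hx.2]
  · intro i; simpa [mixDist] using hx.1 i

lemma mixDist_sum (x : E n) : ∑ j, mixDist x j = 1 := by
  rw [Fin.sum_univ_castSucc]
  simp [mixDist]



/-- the gradient vector of `Lstar p` at `x`. -/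
def Gv (p : Fin (n+1) → ℝ) (x : E n) : E n :=
  WithLp.toLp 2 (fun i => Real.log (x i) - Real.log (p i.castSucc)
    - Real.log (1 - ∑ j, x j) + Real.log (p (Fin.last n)))

/-- explicit smooth expression of `Lstar` -/
def Lexp (p : Fin (n+1) → ℝ) (x : E n) : ℝ :=
  (∑ i, (x i * Real.log (x i) - x i * Real.log (p i.castSucc)))
  + ((1 - ∑ j, x j) * Real.log (1 - ∑ j, x j)
     - (1 - ∑ j, x j) * Real.log (p (Fin.last n)))

lemma Lstar_eq_Lexp {p : Fin (n+1) → ℝ} (hp : p ∈ simplex n) {x : E n}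
    (hx : x ∈ Δset n) : Lstar p x = Lexp p x := by
  unfold Lstar KL Lexp
  rw [Fin.sum_univ_castSucc]
  have hlast : (1:ℝ) - ∑ j, x j > 0 := by linarith [hx.2]
  congr 1
  · refine Finset.sum_congr rfl ?_
    intro i _
    have h1 : mixDist x i.castSucc = x i := by simp [mixDist]
    rw [h1, Real.log_div (ne_of_gt (hx.1 i)) (ne_of_gt (hp.1 _))]
    ring
  · have h1 : mixDist x (Fin.last n) = 1 - ∑ j, x j := by simp [mixDist]
    rw [h1, Real.log_div (ne_of_gt hlast) (ne_of_gt (hp.1 _))]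
    ring

lemma isOpen_Δset : IsOpen (Δset n) := by
  have h1 : Δset n = (⋂ i : Fin n, {x : E n | 0 < x i}) ∩ {x : E n | ∑ j, x j < 1} := by
    ext x; simp [Δset, Set.mem_iInter]
  rw [h1]
  refine IsOpen.inter (isOpen_iInter_of_finite fun i => ?_) ?_
  · exact isOpen_lt continuous_const (EuclideanSpace.proj i).continuous
  · exact isOpen_lt (continuous_finset_sum _ fun i _ => (EuclideanSpace.proj i).continuous) continuous_const

/-- the sum as a continuous linear map -/
def sumL (n : ℕ) : E n →L[ℝ] ℝ := ∑ i, EuclideanSpace.proj i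

lemma sumL_apply (v : E n) : sumL n v = ∑ i, v i := by
  simp [sumL, ContinuousLinearMap.sum_apply]

lemma hasFDerivAt_Lexp {p : Fin (n+1) → ℝ} {x : E n}
    (hx : x ∈ Δset n) :
    HasFDerivAt (Lexp p)
      ((∑ i, (Real.log (x i) + 1 - Real.log (p i.castSucc)) • (EuclideanSpace.proj i : E n →L[ℝ] ℝ))
        + (-(Real.log (1 - ∑ j, x j) + 1 - Real.log (p (Fin.last n)))) • sumL n) x := by
  have hlast : (0:ℝ) < 1 - ∑ j, x j := by linarith [hx.2]
  have hsum : HasFDerivAt (fun y : E n => ∑ j, y j) (sumL n) x := by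
    have he : (fun y : E n => ∑ j, y j) = fun y => sumL n y := by
      funext y; rw [sumL_apply]
    rw [he]; exact (sumL n).hasFDerivAt
  have h1 : HasFDerivAt (fun y : E n => ∑ i, (y i * Real.log (y i) - y i * Real.log (p i.castSucc)))
      (∑ i, (Real.log (x i) + 1 - Real.log (p i.castSucc)) • (EuclideanSpace.proj i : E n →L[ℝ] ℝ)) x := by
    refine HasFDerivAt.fun_sum ?_
    intro i _
    have hproj : HasFDerivAt (fun y : E n => y i)
        (EuclideanSpace.proj i : E n →L[ℝ] ℝ) x := by
      have he : (fun y : E n => y i) = fun y => (EuclideanSpace.proj i : E n →L[ℝ] ℝ) y := by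
        funext y; rfl
      rw [he]; exact (EuclideanSpace.proj i : E n →L[ℝ] ℝ).hasFDerivAt
    have hout : HasDerivAt (fun a : ℝ => a * Real.log a - a * Real.log (p i.castSucc))
        (Real.log (x i) + 1 - Real.log (p i.castSucc)) (x i) := by
      have hl : HasDerivAt (fun a : ℝ => a * Real.log a) (Real.log (x i) + 1) (x i) := by
        have := (hasDerivAt_id (x i)).mul (Real.hasDerivAt_log (ne_of_gt (hx.1 i)))
        refine this.congr_deriv (Eq.symm ?_)
        field_simp [ne_of_gt (hx.1 i)]; simp only [id_eq]; ring
      have hr : HasDerivAt (fun a : ℝ => a * Real.log (p i.castSucc))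
          (Real.log (p i.castSucc)) (x i) := by
        simpa using (hasDerivAt_id (x i)).mul_const (Real.log (p i.castSucc))
      exact hl.sub hr
    have := hout.comp_hasFDerivAt x hproj
    exact this
  have h2 : HasFDerivAt (fun y : E n => ((1 - ∑ j, y j) * Real.log (1 - ∑ j, y j)
      - (1 - ∑ j, y j) * Real.log (p (Fin.last n))))
      ((-(Real.log (1 - ∑ j, x j) + 1 - Real.log (p (Fin.last n)))) • sumL n) x := by
    have hin : HasFDerivAt (fun y : E n => 1 - ∑ j, y j) ((-1 : ℝ) • sumL n) x := by
      refine ((hasFDerivAt_const (1:ℝ) x).sub hsum).congr_fderiv ?_; ext v; simp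
    have hout : HasDerivAt (fun a : ℝ => a * Real.log a - a * Real.log (p (Fin.last n)))
        (Real.log (1 - ∑ j, x j) + 1 - Real.log (p (Fin.last n))) (1 - ∑ j, x j) := by
      have hl : HasDerivAt (fun a : ℝ => a * Real.log a) (Real.log (1 - ∑ j, x j) + 1)
          (1 - ∑ j, x j) := by
        have := (hasDerivAt_id (1 - ∑ j, x j)).mul (Real.hasDerivAt_log (ne_of_gt hlast))
        refine this.congr_deriv (Eq.symm ?_)
        field_simp [ne_of_gt hlast]; simp only [id_eq]; ring
      have hr : HasDerivAt (fun a : ℝ => a * Real.log (p (Fin.last n)))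
          (Real.log (p (Fin.last n))) (1 - ∑ j, x j) := by
        simpa using (hasDerivAt_id (1 - ∑ j, x j)).mul_const (Real.log (p (Fin.last n)))
      exact hl.sub hr
    have := hout.comp_hasFDerivAt x hin
    refine this.congr_fderiv (Eq.symm ?_)
    rw [smul_smul]
    congr 1
    ring
  exact h1.add h2

lemma hasGradientAt_Lstar {p : Fin (n+1) → ℝ} (hp : p ∈ simplex n) {x : E n}
    (hx : x ∈ Δset n) : HasGradientAt (Lstar p) (Gv p x) x := by
  have hF := hasFDerivAt_Lexp (p := p) hx
  have hG : HasGradientAt (Lexp p) (Gv p x) x := by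
    rw [hasGradientAt_iff_hasFDerivAt]
    refine hF.congr_fderiv (Eq.symm ?_)
    apply ContinuousLinearMap.ext
    intro v
    rw [InnerProductSpace.toDual_apply_apply]
    simp only [ContinuousLinearMap.add_apply, ContinuousLinearMap.sum_apply,
      ContinuousLinearMap.smul_apply, PiLp.proj_apply, smul_eq_mul,
      sumL_apply]
    rw [PiLp.inner_apply]
    simp only [RCLike.inner_apply, conj_trivial]
    rw [Finset.mul_sum, ← Finset.sum_add_distrib]
    refine Finset.sum_congr rfl fun i _ => ?_
    simp only [Gv, PiLp.toLp_apply]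
    ring
  refine hG.congr_of_eventuallyEq ?_
  have : Δset n ∈ nhds x := isOpen_Δset.mem_nhds hx
  filter_upwards [this] with y hy
  exact Lstar_eq_Lexp hp hy


/-- Cauchy–Schwarz (Sedrakyan): if the positive weights sum to at most 1 then
`(∑ |w i|)^2 ≤ ∑ w i ^ 2 / q i`. -/
lemma CS1 {k : ℕ} (w q : Fin k → ℝ) (hq : ∀ i, 0 < q i) (hq1 : ∑ i, q i ≤ 1) :
    (∑ i, |w i|) ^ 2 ≤ ∑ i, w i ^ 2 / q i := by
  rcases Nat.eq_zero_or_pos k with hk | hk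
  · subst hk; simp
  have hqpos : 0 < ∑ i, q i :=
    Finset.sum_pos (fun i _ => hq i) ⟨⟨0, hk⟩, Finset.mem_univ _⟩
  have h := Finset.sq_sum_div_le_sum_sq_div Finset.univ (fun i => |w i|)
    (g := q) (fun i _ => hq i)
  have h2 : (∑ i, |w i|) ^ 2 ≤ (∑ i, |w i|) ^ 2 / ∑ i, q i := by
    rw [le_div_iff₀ hqpos]
    nlinarith [sq_nonneg (∑ i, |w i|)]
  calc (∑ i, |w i|) ^ 2 ≤ (∑ i, |w i|) ^ 2 / ∑ i, q i := h2
    _ ≤ ∑ i, (fun i => |w i|) i ^ 2 / q i := h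
    _ = ∑ i, w i ^ 2 / q i := by simp [sq_abs]

/-- `(∑ |d i| + |∑ d i|)^2 ≥ 2 * ∑ d i ^ 2`. -/
lemma PN {k : ℕ} (d : Fin k → ℝ) :
    2 * ∑ i, d i ^ 2 ≤ (∑ i, |d i| + |∑ i, d i|) ^ 2 := by
  set P := ∑ i, max (d i) 0 with hP
  set M := ∑ i, max (-d i) 0 with hM
  have hPpos : 0 ≤ P := Finset.sum_nonneg fun i _ => le_max_right _ _
  have hMpos : 0 ≤ M := Finset.sum_nonneg fun i _ => le_max_right _ _
  have habs : ∑ i, |d i| = P + M := by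
    rw [← Finset.sum_add_distrib]
    refine Finset.sum_congr rfl fun i _ => ?_
    rcases le_total 0 (d i) with h | h
    · rw [abs_of_nonneg h, max_eq_left h, max_eq_right (by linarith)]; ring
    · rw [abs_of_nonpos h, max_eq_right h, max_eq_left (by linarith)]; ring
  have hsum : ∑ i, d i = P - M := by
    rw [hP, hM, ← Finset.sum_sub_distrib]
    refine Finset.sum_congr rfl fun i _ => ?_
    rcases le_total 0 (d i) with h | h
    · rw [max_eq_left h, max_eq_right (by linarith)]; ring
    · rw [max_eq_right h, max_eq_left (by linarith)]; ring
  have key : ∀ (a : Fin k → ℝ), (∀ i, 0 ≤ a i) → ∑ i, a i ^ 2 ≤ (∑ i, a i) ^ 2 := by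
    intro a ha
    have hstep : ∀ i ∈ Finset.univ, a i ^ 2 ≤ a i * ∑ j, a j := by
      intro i _
      have := Finset.single_le_sum (f := a) (fun j _ => ha j) (Finset.mem_univ i)
      nlinarith [ha i]
    calc ∑ i, a i ^ 2 ≤ ∑ i, a i * ∑ j, a j := Finset.sum_le_sum hstep
      _ = (∑ i, a i) ^ 2 := by rw [← Finset.sum_mul]; ring
  have hsq : ∑ i, d i ^ 2 ≤ P ^ 2 + M ^ 2 := by
    have hpoint : ∀ i, d i ^ 2 = (max (d i) 0) ^ 2 + (max (-d i) 0) ^ 2 := by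
      intro i
      rcases le_total 0 (d i) with h | h
      · rw [max_eq_left h, max_eq_right (by linarith)]; ring
      · rw [max_eq_right h, max_eq_left (by linarith)]; ring
    calc ∑ i, d i ^ 2 = ∑ i, ((max (d i) 0) ^ 2 + (max (-d i) 0) ^ 2) :=
          Finset.sum_congr rfl fun i _ => hpoint i
      _ = (∑ i, (max (d i) 0) ^ 2) + ∑ i, (max (-d i) 0) ^ 2 := Finset.sum_add_distrib
      _ ≤ P ^ 2 + M ^ 2 := by
          gcongr
          · exact key _ fun i => le_max_right _ _
          · exact key _ fun i => le_max_right _ _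
  rw [habs, hsum]
  rcases le_total P M with h | h
  · rw [abs_of_nonpos (by linarith)]
    nlinarith
  · rw [abs_of_nonneg (by linarith)]
    nlinarith

/-- Gibbs' inequality, strict version. -/
lemma KL_pos {q p : Fin (n+1) → ℝ} (hq : q ∈ simplex n) (hp : p ∈ simplex n)
    (hne : q ≠ p) : 0 < KL q p := by
  obtain ⟨i₀, hi₀⟩ : ∃ i, q i ≠ p i := by
    by_contra h
    push_neg at h
    exact hne (funext h)
  have hterm : ∀ i ∈ Finset.univ, q i - p i ≤ q i * Real.log (q i / p i) := by
    intro i _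
    have h1 : Real.log (p i / q i) ≤ p i / q i - 1 :=
      Real.log_le_sub_one_of_pos (div_pos (hp.1 i) (hq.1 i))
    have h2 : Real.log (q i / p i) = - Real.log (p i / q i) := by
      rw [← Real.log_inv]
      congr 1
      field_simp
    rw [h2]
    have hqi := hq.1 i
    have := mul_le_mul_of_nonneg_left h1 (le_of_lt hqi)
    rw [mul_sub, mul_one, mul_div_cancel₀ _ (ne_of_gt hqi)] at this
    nlinarith
  have hstrict : q i₀ - p i₀ < q i₀ * Real.log (q i₀ / p i₀) := by
    have hne1 : p i₀ / q i₀ ≠ 1 := by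
      intro h
      exact hi₀ ((div_eq_one_iff_eq (ne_of_gt (hq.1 i₀))).1 h).symm
    have h1 : Real.log (p i₀ / q i₀) < p i₀ / q i₀ - 1 :=
      Real.log_lt_sub_one_of_pos (div_pos (hp.1 i₀) (hq.1 i₀)) hne1
    have h2 : Real.log (q i₀ / p i₀) = - Real.log (p i₀ / q i₀) := by
      rw [← Real.log_inv]; congr 1; field_simp
    rw [h2]
    have hqi := hq.1 i₀
    have := (mul_lt_mul_iff_right₀ hqi).2 h1
    rw [mul_sub, mul_one, mul_div_cancel₀ _ (ne_of_gt hqi)] at this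
    nlinarith
  have hlt : ∑ i, (q i - p i) < ∑ i, q i * Real.log (q i / p i) :=
    Finset.sum_lt_sum hterm ⟨i₀, Finset.mem_univ _, hstrict⟩
  have hzero : ∑ i, (q i - p i) = 0 := by
    rw [Finset.sum_sub_distrib, hq.2, hp.2]; ring
  unfold KL
  linarith

/-- logarithm is Lipschitz on `[ε, ∞)`. -/
lemma log_lip {ε a b : ℝ} (hε : 0 < ε) (ha : ε ≤ a) (hb : ε ≤ b) :
    |Real.log a - Real.log b| ≤ |a - b| / ε := by
  wlog hab : b ≤ a generalizing a b
  · have := this hb ha (by linarith)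
    rwa [abs_sub_comm, abs_sub_comm b a] at this
  have ha0 : 0 < a := lt_of_lt_of_le hε ha
  have hb0 : 0 < b := lt_of_lt_of_le hε hb
  have h1 : Real.log a - Real.log b = Real.log (a / b) := (Real.log_div (ne_of_gt ha0) (ne_of_gt hb0)).symm
  have h2 : Real.log (a / b) ≤ a / b - 1 := Real.log_le_sub_one_of_pos (div_pos ha0 hb0)
  have h3 : a / b - 1 = (a - b) / b := by field_simp
  have h4 : (a - b) / b ≤ (a - b) / ε := by
    apply div_le_div_of_nonneg_left (by linarith) hε hb
  have h5 : 0 ≤ Real.log a - Real.log b := by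
    rw [h1]
    apply Real.log_nonneg
    rw [le_div_iff₀ hb0]; linarith
  rw [abs_of_nonneg h5, abs_of_nonneg (by linarith : (0:ℝ) ≤ a - b)]
  calc Real.log a - Real.log b ≤ a/b - 1 := by rw [h1]; exact h2
    _ = (a-b)/b := h3
    _ ≤ (a-b)/ε := h4


section Segment

variable {p : Fin (n+1) → ℝ} {x : E n}

/-- Strong-convexity based bounds along the segment from `etaCoord p` to `x`. -/
lemma segment_bounds (hp : p ∈ simplex n) (hx : x ∈ Δset n) :
    (Lstar p x + ∑ i, (x i - p i.castSucc) ^ 2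
        ≤ ∑ i, (x i - p i.castSucc) * Gv p x i)
    ∧ (∑ i, (x i - p i.castSucc) ^ 2 ≤ Lstar p x) := by
  classical
  set xs : E n := etaCoord p with hxs_def
  have hxs : xs ∈ Δset n := etaCoord_mem hp
  set d' : E n := x - xs with hd'_def
  have hd'app : ∀ i, d' i = x i - p i.castSucc := by
    intro i; rw [hd'_def, PiLp.sub_apply]; rfl
  set D : ℝ := ∑ i, d' i with hD_def
  set N : ℝ := ∑ i, (d' i) ^ 2 with hN_def
  set pl : ℝ := p (Fin.last n) with hpl_def
  have hpl : 0 < pl := hp.1 _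
  have hsum_xs : ∑ i, xs i = 1 - pl := sum_eta hp
  set γ : ℝ → E n := fun s => xs + s • d' with hγ_def
  have hγapp : ∀ s i, γ s i = xs i + s * d' i := by
    intro s i; rw [hγ_def]; simp [PiLp.add_apply, PiLp.smul_apply]
  have hγ0 : γ 0 = xs := by rw [hγ_def]; simp
  have hγ1 : γ 1 = x := by rw [hγ_def]; simp [hd'_def]
  have hγconv : ∀ s i, γ s i = (1 - s) * xs i + s * x i := by
    intro s i; rw [hγapp, hd'_def, PiLp.sub_apply]; ring
  have hγsum : ∀ s, ∑ j, γ s j = (1 - s) * (1 - pl) + s * ∑ j, x j := by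
    intro s
    calc ∑ j, γ s j = ∑ j, ((1 - s) * xs j + s * x j) :=
          Finset.sum_congr rfl fun j _ => hγconv s j
      _ = (1 - s) * ∑ j, xs j + s * ∑ j, x j := by
          rw [Finset.sum_add_distrib, Finset.mul_sum, Finset.mul_sum]
      _ = (1 - s) * (1 - pl) + s * ∑ j, x j := by rw [hsum_xs]
  have hγl : ∀ s, 1 - ∑ j, γ s j = pl - s * D := by
    intro s
    rw [hγsum, hD_def]
    have : ∑ i, d' i = ∑ i, (x i - xs i) := by
      refine Finset.sum_congr rfl fun i _ => ?_
      rw [hd'_def, PiLp.sub_apply]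
    rw [this, Finset.sum_sub_distrib, hsum_xs]
    ring
  have hγmem : ∀ s, s ∈ Set.Icc (0:ℝ) 1 → γ s ∈ Δset n := by
    rintro s ⟨hs0, hs1⟩
    constructor
    · intro i
      rw [hγconv]
      rcases eq_or_lt_of_le hs0 with h | h
      · rw [← h]; simpa using hxs.1 i
      rcases eq_or_lt_of_le hs1 with h1 | h1
      · rw [h1]; simpa using hx.1 i
      nlinarith [hxs.1 i, hx.1 i]
    · rw [hγsum]
      have h2 := hx.2
      have key : 0 < (1 - s) * pl + s * (1 - ∑ j, x j) := by
        rcases eq_or_lt_of_le hs0 with h | h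
        · rw [← h]; simpa using hpl
        · have hsx : 0 < s * (1 - ∑ j, x j) := mul_pos h (by linarith)
          nlinarith [mul_nonneg (by linarith : (0:ℝ) ≤ 1 - s) hpl.le]
      nlinarith
  have hposi : ∀ s, s ∈ Set.Icc (0:ℝ) 1 → ∀ i, 0 < xs i + s * d' i := by
    intro s hs i
    have := (hγmem s hs).1 i
    rwa [hγapp] at this
  have hposl : ∀ s, s ∈ Set.Icc (0:ℝ) 1 → 0 < pl - s * D := by
    intro s hs
    have := (hγmem s hs).2
    have h2 := hγl s
    linarith
  -- the derivative of h along the segment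
  set φ : ℝ → ℝ := fun s => (∑ i, d' i * (Real.log (xs i + s * d' i) - Real.log (xs i)))
      - D * (Real.log (pl - s * D) - Real.log pl) with hφ_def
  have hφ0 : φ 0 = 0 := by simp [hφ_def]
  -- value identity: the inner product of the gradient with d' equals φ s
  have hval : ∀ s ∈ Set.Icc (0:ℝ) 1, ∑ i, Gv p (γ s) i * d' i = φ s := by
    intro s hs
    rw [hφ_def]
    have : ∀ i, Gv p (γ s) i * d' i
        = d' i * (Real.log (xs i + s * d' i) - Real.log (xs i))
          - d' i * (Real.log (pl - s * D) - Real.log pl) := by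
      intro i
      simp only [Gv, PiLp.toLp_apply]
      rw [hγl s, hγapp s i]
      have hxsi : xs i = p i.castSucc := rfl
      rw [← hxsi, ← hpl_def]
      ring
    rw [Finset.sum_congr rfl fun i _ => this i, Finset.sum_sub_distrib, ← Finset.sum_mul]
  have hh : ∀ s ∈ Set.Icc (0:ℝ) 1, HasDerivAt (fun t => Lstar p (γ t)) (φ s) s := by
    intro s hs
    have hγd : HasDerivAt γ d' s := by
      have h1 : HasDerivAt (fun t : ℝ => t • d') ((1:ℝ) • d') s :=
        (hasDerivAt_id s).smul_const d'
      have h2 := h1.const_add xs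
      rw [one_smul] at h2; exact h2
    have hgrad := (hasGradientAt_Lstar hp (hγmem s hs)).hasFDerivAt
    have := hgrad.comp_hasDerivAt s hγd
    refine this.congr_deriv (Eq.symm ?_)
    rw [InnerProductSpace.toDual_apply_apply, PiLp.inner_apply]
    simp only [RCLike.inner_apply, conj_trivial]
    exact (hval s hs).symm.trans (Finset.sum_congr rfl fun i _ => mul_comm _ _)
  -- derivative of φ
  set V : ℝ → ℝ := fun s => (∑ i, (d' i) ^ 2 / (xs i + s * d' i)) + D ^ 2 / (pl - s * D)
    with hV_def
  have hφd : ∀ s ∈ Set.Icc (0:ℝ) 1, HasDerivAt φ (V s) s := by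
    intro s hs
    have h1 : HasDerivAt (fun t => ∑ i, d' i * (Real.log (xs i + t * d' i) - Real.log (xs i)))
        (∑ i, (d' i) ^ 2 / (xs i + s * d' i)) s := by
      refine HasDerivAt.fun_sum ?_
      intro i _
      have haff : HasDerivAt (fun t : ℝ => xs i + t * d' i) (d' i) s := by
        simpa using ((hasDerivAt_id s).mul_const (d' i)).const_add (xs i)
      have hlog : HasDerivAt (fun t : ℝ => Real.log (xs i + t * d' i))
          ((xs i + s * d' i)⁻¹ * d' i) s :=
        by have h := (Real.hasDerivAt_log (ne_of_gt (hposi s hs i))).comp s haff; exact h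
      have := (hlog.sub_const (Real.log (xs i))).const_mul (d' i)
      refine this.congr_deriv (Eq.symm ?_)
      field_simp
    have h2 : HasDerivAt (fun t => D * (Real.log (pl - t * D) - Real.log pl))
        (- (D ^ 2 / (pl - s * D))) s := by
      have haff : HasDerivAt (fun t : ℝ => pl - t * D) (-D) s := by
        simpa using ((hasDerivAt_id s).mul_const D).const_sub pl
      have hlog : HasDerivAt (fun t : ℝ => Real.log (pl - t * D))
          ((pl - s * D)⁻¹ * (-D)) s :=
        by have h := (Real.hasDerivAt_log (ne_of_gt (hposl s hs))).comp s haff; exact h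
      have := (hlog.sub_const (Real.log pl)).const_mul D
      refine this.congr_deriv (Eq.symm ?_)
      field_simp
    have := h1.sub h2
    rw [hφ_def, hV_def]
    refine this.congr_deriv (Eq.symm ?_)
    ring
  -- lower bound for V
  have hVN : ∀ s ∈ Set.Icc (0:ℝ) 1, 2 * N ≤ V s := by
    intro s hs
    set w : Fin (n+1) → ℝ := Fin.snoc (fun i => d' i) D with hw_def
    set q : Fin (n+1) → ℝ := Fin.snoc (fun i => xs i + s * d' i) (pl - s * D) with hq_def
    have hqpos : ∀ j, 0 < q j := by
      intro j
      refine Fin.lastCases ?_ ?_ j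
      · rw [hq_def]; simpa using hposl s hs
      · intro i; rw [hq_def]; simpa using hposi s hs i
    have hqsum : ∑ j, q j = 1 := by
      rw [hq_def, Fin.sum_univ_castSucc]
      simp only [Fin.snoc_castSucc, Fin.snoc_last]
      have h1 : ∑ i : Fin n, (xs i + s * d' i) = (1 - pl) + s * D := by
        rw [Finset.sum_add_distrib, hsum_xs, ← Finset.mul_sum, ← hD_def]
      rw [h1]; ring
    have hCS := CS1 w q hqpos (le_of_eq hqsum)
    have hsplit : ∑ j, w j ^ 2 / q j = V s := by
      rw [Fin.sum_univ_castSucc, hw_def, hq_def]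
      simp only [Fin.snoc_castSucc, Fin.snoc_last]; rfl
    have habs : ∑ j, |w j| = (∑ i, |d' i|) + |D| := by
      rw [Fin.sum_univ_castSucc, hw_def]
      simp only [Fin.snoc_castSucc, Fin.snoc_last]
    have hPN := PN (fun i => d' i)
    rw [habs] at hCS
    rw [hsplit] at hCS
    calc 2 * N = 2 * ∑ i, (d' i) ^ 2 := by rw [hN_def]
      _ ≤ ((∑ i, |d' i|) + |∑ i, d' i|) ^ 2 := hPN
      _ = ((∑ i, |d' i|) + |D|) ^ 2 := by rw [← hD_def]
      _ ≤ V s := hCS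
  -- value at the left endpoint
  have hΓ0 : Lstar p (γ 0) = 0 := by
    rw [hγ0, hxs_def]
    unfold Lstar
    rw [mixDist_etaCoord hp]
    unfold KL
    apply Finset.sum_eq_zero
    intro i _
    rw [div_self (ne_of_gt (hp.1 i)), Real.log_one, mul_zero]
  have hIcc : Convex ℝ (Set.Icc (0:ℝ) 1) := convex_Icc 0 1
  have h0mem : (0:ℝ) ∈ Set.Icc (0:ℝ) 1 := by norm_num
  have h1mem : (1:ℝ) ∈ Set.Icc (0:ℝ) 1 := by norm_num
  -- u is monotone
  set u : ℝ → ℝ := fun s => φ s - 2 * N * s with hu_def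
  have hud : ∀ s ∈ Set.Icc (0:ℝ) 1, HasDerivAt u (V s - 2 * N) s := by
    intro s hs
    have h2 : HasDerivAt (fun t : ℝ => 2 * N * t) (2 * N) s := by
      simpa using (hasDerivAt_id s).const_mul (2 * N)
    exact (hφd s hs).sub h2
  have humono : MonotoneOn u (Set.Icc (0:ℝ) 1) := by
    apply monotoneOn_of_deriv_nonneg hIcc
    · exact fun s hs => ((hud s hs).continuousAt).continuousWithinAt
    · intro s hs
      rw [interior_Icc] at hs
      exact ((hud s (Set.mem_Icc_of_Ioo hs)).differentiableAt).differentiableWithinAt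
    · intro s hs
      rw [interior_Icc] at hs
      rw [(hud s (Set.mem_Icc_of_Ioo hs)).deriv]
      have := hVN s (Set.mem_Icc_of_Ioo hs)
      linarith
  -- v is antitone
  set v : ℝ → ℝ := fun s => Lstar p (γ s) - φ 1 * (s - 1) - N * (s - 1) ^ 2 with hv_def
  have hvd : ∀ s ∈ Set.Icc (0:ℝ) 1,
      HasDerivAt v (φ s - φ 1 - N * (2 * (s - 1))) s := by
    intro s hs
    have h2 : HasDerivAt (fun t : ℝ => φ 1 * (t - 1)) (φ 1) s := by
      simpa using ((hasDerivAt_id s).sub_const 1).const_mul (φ 1)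
    have h3 : HasDerivAt (fun t : ℝ => N * (t - 1) ^ 2) (N * (2 * (s - 1))) s := by
      have := (((hasDerivAt_id s).sub_const 1).pow 2).const_mul N
      refine this.congr_deriv (Eq.symm ?_)
      simp only [id_eq, Nat.cast_ofNat, pow_one]
      ring
    exact ((hh s hs).sub h2).sub h3
  have hvanti : AntitoneOn v (Set.Icc (0:ℝ) 1) := by
    apply antitoneOn_of_deriv_nonpos hIcc
    · exact fun s hs => ((hvd s hs).continuousAt).continuousWithinAt
    · intro s hs
      rw [interior_Icc] at hs
      exact ((hvd s (Set.mem_Icc_of_Ioo hs)).differentiableAt).differentiableWithinAt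
    · intro s hs
      rw [interior_Icc] at hs
      rw [(hvd s (Set.mem_Icc_of_Ioo hs)).deriv]
      have h4 := humono (Set.mem_Icc_of_Ioo hs) h1mem (le_of_lt hs.2)
      simp only [hu_def] at h4
      nlinarith [hs.1, hs.2]
  -- v₂ is monotone
  set v₂ : ℝ → ℝ := fun s => Lstar p (γ s) - N * s ^ 2 with hv₂_def
  have hv₂d : ∀ s ∈ Set.Icc (0:ℝ) 1, HasDerivAt v₂ (φ s - N * (2 * s)) s := by
    intro s hs
    have h3 : HasDerivAt (fun t : ℝ => N * t ^ 2) (N * (2 * s)) s := by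
      have := ((hasDerivAt_id s).pow 2).const_mul N
      refine this.congr_deriv (Eq.symm ?_)
      simp only [id_eq, Nat.cast_ofNat, pow_one]
      ring
    exact (hh s hs).sub h3
  have hv₂mono : MonotoneOn v₂ (Set.Icc (0:ℝ) 1) := by
    apply monotoneOn_of_deriv_nonneg hIcc
    · exact fun s hs => ((hv₂d s hs).continuousAt).continuousWithinAt
    · intro s hs
      rw [interior_Icc] at hs
      exact ((hv₂d s (Set.mem_Icc_of_Ioo hs)).differentiableAt).differentiableWithinAt
    · intro s hs
      rw [interior_Icc] at hs
      rw [(hv₂d s (Set.mem_Icc_of_Ioo hs)).deriv]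
      have h4 := humono h0mem (Set.mem_Icc_of_Ioo hs) (le_of_lt hs.1)
      simp only [hu_def, hφ0] at h4
      nlinarith [hs.1]
  -- conclusions
  have hgoal1 : Lstar p x + N ≤ φ 1 := by
    have := hvanti h0mem h1mem (by norm_num)
    simp only [hv_def, hγ1, hΓ0] at this
    nlinarith [this]
  have hgoal2 : N ≤ Lstar p x := by
    have := hv₂mono h0mem h1mem (by norm_num)
    simp only [hv₂_def, hγ1, hΓ0] at this
    nlinarith [this]
  have hφ1 : ∑ i, (x i - p i.castSucc) * Gv p x i = φ 1 := by
    have := hval 1 h1mem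
    rw [hγ1] at this
    rw [← this]
    refine Finset.sum_congr rfl fun i _ => ?_
    rw [hd'app]
    ring
  have hNeq : ∑ i, (x i - p i.castSucc) ^ 2 = N := by
    rw [hN_def]
    exact Finset.sum_congr rfl fun i _ => by rw [hd'app]
  rw [hφ1, hNeq]
  exact ⟨hgoal1, hgoal2⟩

end Segment


/-- Polyak–Łojasiewicz inequality. -/
lemma PL_bound {p : Fin (n+1) → ℝ} {x : E n} (hp : p ∈ simplex n) (hx : x ∈ Δset n) :
    4 * Lstar p x ≤ ∑ i, (Gv p x i) ^ 2 := by
  obtain ⟨h1, h2⟩ := segment_bounds hp hx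
  set ρ : ℝ := ∑ i, (x i - p i.castSucc) ^ 2 with hρ_def
  set G2 : ℝ := ∑ i, (Gv p x i) ^ 2 with hG2_def
  set inn : ℝ := ∑ i, (x i - p i.castSucc) * Gv p x i with hinn_def
  set g : ℝ := Lstar p x with hg_def
  have hρ0 : 0 ≤ ρ := Finset.sum_nonneg fun i _ => sq_nonneg _
  have hG20 : 0 ≤ G2 := Finset.sum_nonneg fun i _ => sq_nonneg _
  have hCS : inn ^ 2 ≤ ρ * G2 :=
    Finset.sum_mul_sq_le_sq_mul_sq Finset.univ (fun i => x i - p i.castSucc) (fun i => Gv p x i)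
  by_cases hρz : ρ = 0
  · have hinn0 : inn ^ 2 ≤ 0 := by rw [hρz] at hCS; linarith
    have : inn = 0 := by nlinarith [sq_nonneg inn]
    have hgle : g ≤ 0 := by rw [hρz] at h1; linarith
    have hgge : 0 ≤ g := by rw [hρz] at h2; linarith
    have : g = 0 := le_antisymm hgle hgge
    rw [this]; linarith
  · have hρpos : 0 < ρ := lt_of_le_of_ne hρ0 (Ne.symm hρz)
    have hinnpos : 0 ≤ g + ρ := by
      have : ρ ≤ g := h2
      linarith
    have hsq : (g + ρ) ^ 2 ≤ inn ^ 2 := by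
      apply pow_le_pow_left₀ hinnpos h1
    nlinarith [sq_nonneg (g - ρ), hsq, hCS]

/-- Smoothness bound for the gradient, given a uniform coordinate bound. -/
lemma grad_sq_le {p : Fin (n+1) → ℝ} {x : E n} (hp : p ∈ simplex n)
    {ε : ℝ} (hε : 0 < ε)
    (hc1 : ∀ i, ε ≤ x i) (hc2 : ε ≤ 1 - ∑ j, x j) (hc3 : ∀ j, ε ≤ p j) :
    ∑ i, (Gv p x i) ^ 2 ≤ (2 * (1 + (n:ℝ) ^ 2) / ε ^ 2) * ∑ i, (x i - p i.castSucc) ^ 2 := by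
  set d : Fin n → ℝ := fun i => x i - p i.castSucc with hd_def
  set T : ℝ := ∑ i, |d i| with hT_def
  set ρ : ℝ := ∑ i, d i ^ 2 with hρ_def
  have hρ0 : 0 ≤ ρ := Finset.sum_nonneg fun i _ => sq_nonneg _
  have hT0 : 0 ≤ T := Finset.sum_nonneg fun i _ => abs_nonneg _
  have hTρ : T ^ 2 ≤ (n:ℝ) * ρ := by
    have := sq_sum_le_card_mul_sum_sq (s := Finset.univ) (f := fun i => |d i|)
    simpa [sq_abs] using this
  have hlastdiff : p (Fin.last n) - (1 - ∑ j, x j) = ∑ j, d j := by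
    have h1 := sum_eta hp
    rw [hd_def, Finset.sum_sub_distrib, h1]
    ring
  have habs : ∀ i, |Gv p x i| ≤ (|d i| + T) / ε := by
    intro i
    have h1 : |Real.log (x i) - Real.log (p i.castSucc)| ≤ |d i| / ε :=
      log_lip hε (hc1 i) (hc3 i.castSucc)
    have h2 : |Real.log (1 - ∑ j, x j) - Real.log (p (Fin.last n))| ≤ T / ε := by
      have h3 := log_lip hε hc2 (hc3 (Fin.last n))
      refine h3.trans ?_
      gcongr
      have h5 : (1 - ∑ j, x j) - p (Fin.last n) = -(∑ j, d j) := by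
        rw [← hlastdiff]; ring
      calc |(1 - ∑ j, x j) - p (Fin.last n)| = |∑ j, d j| := by rw [h5, abs_neg]
        _ ≤ ∑ j, |d j| := Finset.abs_sum_le_sum_abs _ _
    have h4 : Gv p x i = (Real.log (x i) - Real.log (p i.castSucc))
        - (Real.log (1 - ∑ j, x j) - Real.log (p (Fin.last n))) := by
      simp only [Gv, PiLp.toLp_apply]; ring
    rw [h4]
    calc |(Real.log (x i) - Real.log (p i.castSucc))
        - (Real.log (1 - ∑ j, x j) - Real.log (p (Fin.last n)))|
        ≤ |Real.log (x i) - Real.log (p i.castSucc)|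
          + |Real.log (1 - ∑ j, x j) - Real.log (p (Fin.last n))| := abs_sub _ _
      _ ≤ |d i| / ε + T / ε := add_le_add h1 h2
      _ = (|d i| + T) / ε := by ring
  have hsq : ∀ i, (Gv p x i) ^ 2 ≤ (2 * d i ^ 2 + 2 * T ^ 2) / ε ^ 2 := by
    intro i
    have h1 := habs i
    have h2 : (Gv p x i) ^ 2 ≤ ((|d i| + T) / ε) ^ 2 := by
      rw [← sq_abs (Gv p x i)]
      apply pow_le_pow_left₀ (abs_nonneg _) h1
    refine h2.trans ?_
    rw [div_pow]
    gcongr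
    nlinarith [sq_nonneg (|d i| - T), sq_abs (d i)]
  calc ∑ i, (Gv p x i) ^ 2 ≤ ∑ i, (2 * d i ^ 2 + 2 * T ^ 2) / ε ^ 2 :=
        Finset.sum_le_sum fun i _ => hsq i
    _ = (2 * ρ + (n:ℝ) * (2 * T ^ 2)) / ε ^ 2 := by
        rw [← Finset.sum_div]
        congr 1
        rw [Finset.sum_add_distrib, ← Finset.mul_sum, ← hρ_def, Finset.sum_const]
        simp [mul_comm]
    _ ≤ (2 * (1 + (n:ℝ) ^ 2) / ε ^ 2) * ρ := by
        rw [div_mul_eq_mul_div]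
        gcongr
        nlinarith [hTρ, hρ0, Nat.cast_nonneg (α := ℝ) n]

/-- Grönwall, upper version. -/
lemma gronwall_up {f f' : ℝ → ℝ} {a : ℝ}
    (hf : ∀ t ≥ (0:ℝ), HasDerivAt f (f' t) t)
    (hb : ∀ t ≥ (0:ℝ), f' t + a * f t ≤ 0) :
    ∀ t ≥ (0:ℝ), f t ≤ f 0 * Real.exp (-(a * t)) := by
  set F := fun t => f t * Real.exp (a * t) with hF_def
  have hFd : ∀ t ≥ (0:ℝ), HasDerivAt F ((f' t + a * f t) * Real.exp (a * t)) t := by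
    intro t ht
    have he : HasDerivAt (fun t => Real.exp (a * t)) (a * Real.exp (a * t)) t := by
      have := (Real.hasDerivAt_exp (a * t)).comp t ((hasDerivAt_id t).const_mul a)
      refine this.congr_deriv ?_; ring
    have := (hf t ht).mul he
    refine this.congr_deriv (Eq.symm ?_)
    ring
  have hanti : AntitoneOn F (Set.Ici 0) := by
    apply antitoneOn_of_deriv_nonpos (convex_Ici 0)
    · exact fun t ht => ((hFd t ht).continuousAt).continuousWithinAt
    · intro t ht; rw [interior_Ici] at ht
      exact ((hFd t (le_of_lt ht)).differentiableAt).differentiableWithinAt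
    · intro t ht; rw [interior_Ici] at ht
      rw [(hFd t (le_of_lt ht)).deriv]
      have h1 := hb t (le_of_lt ht)
      nlinarith [Real.exp_pos (a * t)]
  intro t ht
  have h1 : F t ≤ F 0 := hanti (Set.mem_Ici.2 le_rfl) (Set.mem_Ici.2 ht) ht
  have h2 : f 0 = F 0 := by simp [hF_def]
  rw [h2, Real.exp_neg]
  have h3 : 0 < Real.exp (a * t) := Real.exp_pos _
  calc f t = F t * (Real.exp (a * t))⁻¹ := by
        rw [hF_def]
        field_simp
    _ ≤ F 0 * (Real.exp (a * t))⁻¹ := by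
        apply mul_le_mul_of_nonneg_right h1 (by positivity)

/-- Grönwall, lower version. -/
lemma gronwall_down {f f' : ℝ → ℝ} {a : ℝ}
    (hf : ∀ t ≥ (0:ℝ), HasDerivAt f (f' t) t)
    (hb : ∀ t ≥ (0:ℝ), 0 ≤ f' t + a * f t) :
    ∀ t ≥ (0:ℝ), f 0 * Real.exp (-(a * t)) ≤ f t := by
  set F := fun t => f t * Real.exp (a * t) with hF_def
  have hFd : ∀ t ≥ (0:ℝ), HasDerivAt F ((f' t + a * f t) * Real.exp (a * t)) t := by
    intro t ht
    have he : HasDerivAt (fun t => Real.exp (a * t)) (a * Real.exp (a * t)) t := by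
      have := (Real.hasDerivAt_exp (a * t)).comp t ((hasDerivAt_id t).const_mul a)
      refine this.congr_deriv ?_; ring
    have := (hf t ht).mul he
    refine this.congr_deriv (Eq.symm ?_)
    ring
  have hmono : MonotoneOn F (Set.Ici 0) := by
    apply monotoneOn_of_deriv_nonneg (convex_Ici 0)
    · exact fun t ht => ((hFd t ht).continuousAt).continuousWithinAt
    · intro t ht; rw [interior_Ici] at ht
      exact ((hFd t (le_of_lt ht)).differentiableAt).differentiableWithinAt
    · intro t ht; rw [interior_Ici] at ht
      rw [(hFd t (le_of_lt ht)).deriv]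
      have h1 := hb t (le_of_lt ht)
      nlinarith [Real.exp_pos (a * t)]
  intro t ht
  have h1 : F 0 ≤ F t := hmono (Set.mem_Ici.2 le_rfl) (Set.mem_Ici.2 ht) ht
  have h2 : f 0 = F 0 := by simp [hF_def]
  rw [h2, Real.exp_neg]
  have h3 : 0 < Real.exp (a * t) := Real.exp_pos _
  calc F 0 * (Real.exp (a * t))⁻¹ ≤ F t * (Real.exp (a * t))⁻¹ := by
        apply mul_le_mul_of_nonneg_right h1 (by positivity)
    _ = f t := by
        rw [hF_def]
        field_simp

end Aux18

open Aux18

/-- Convergence of the `η`-gradient flow for the dual loss: rate higher than 2. -/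
theorem stmt_18 {n : ℕ} (p q₀ : Fin (n+1) → ℝ)
    (hp : p ∈ simplex n) (hq₀ : q₀ ∈ simplex n) (hne : q₀ ≠ p)
    (η : ℝ → E n) (hmem : ∀ t ≥ (0 : ℝ), η t ∈ Δset n)
    (hη0 : η 0 = etaCoord q₀)
    (hode : ∀ t ≥ (0 : ℝ), HasDerivAt η (-(gradient (Lstar p) (η t))) t) :
    ∃ m L c : ℝ, 1 < m ∧ m ≤ L ∧ 0 < c ∧
      ∀ t ≥ (0 : ℝ),
        c * Real.exp (-2 * L * t) ≤ Lstar p (η t) ∧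
        Lstar p (η t) ≤ c * Real.exp (-2 * m * t) ∧
        c * Real.exp (-2 * m * t) ≤ c * Real.exp (-2 * t) := by
  classical
  rcases Nat.eq_zero_or_pos n with hn0 | hnpos
  · exfalso
    subst hn0
    apply hne
    funext j
    have hq1 : q₀ j = 1 := by
      have h := hq₀.2
      rw [Fin.sum_univ_one] at h
      have hj : j = 0 := by omega
      rw [hj]
      exact h
    have hp1 : p j = 1 := by
      have h := hp.2
      rw [Fin.sum_univ_one] at h
      have hj : j = 0 := by omega
      rw [hj]
      exact h
    rw [hq1, hp1]
  -- main case : n ≥ 1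
  have hnR : (1:ℝ) ≤ (n:ℝ) := by exact_mod_cast hnpos
  have hnR0 : (0:ℝ) < (n:ℝ) := by linarith
  haveI : Nonempty (Fin n) := ⟨⟨0, hnpos⟩⟩
  -- derivative facts
  have hode' : ∀ t ≥ (0:ℝ), HasDerivAt η (-(Gv p (η t))) t := by
    intro t ht
    have h := hode t ht
    rwa [(hasGradientAt_Lstar hp (hmem t ht)).gradient] at h
  have hgd : ∀ t ≥ (0:ℝ), HasDerivAt (fun t => Lstar p (η t))
      (-(∑ i, (Gv p (η t) i) ^ 2)) t := by
    intro t ht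
    have hf := (hasGradientAt_Lstar hp (hmem t ht)).hasFDerivAt
    have h := hf.comp_hasDerivAt t (hode' t ht)
    refine h.congr_deriv (Eq.symm ?_)
    rw [InnerProductSpace.toDual_apply_apply, PiLp.inner_apply]
    simp only [RCLike.inner_apply, conj_trivial]
    have hterm : ∀ i : Fin n, (-(Gv p (η t))) i * Gv p (η t) i = -((Gv p (η t) i) ^ 2) := by
      intro i
      rw [PiLp.neg_apply]
      ring
    rw [Finset.sum_congr rfl fun i _ => hterm i]
    rw [Finset.sum_neg_distrib]
  have hcoordd : ∀ (i : Fin n), ∀ t ≥ (0:ℝ),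
      HasDerivAt (fun t => η t i) (-(Gv p (η t) i)) t := by
    intro i t ht
    have hproj := (EuclideanSpace.proj i : E n →L[ℝ] ℝ).hasFDerivAt (x := η t)
    have h := hproj.comp_hasDerivAt t (hode' t ht)
    have hval : (EuclideanSpace.proj i : E n →L[ℝ] ℝ) (-(Gv p (η t))) = -(Gv p (η t) i) := by
      simp [PiLp.neg_apply]
    rw [hval] at h
    exact h
  have hρd : ∀ t ≥ (0:ℝ), HasDerivAt (fun t => ∑ i, (η t i - p i.castSucc) ^ 2)
      (-2 * ∑ i, (η t i - p i.castSucc) * Gv p (η t) i) t := by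
    intro t ht
    have hterm : ∀ i : Fin n, HasDerivAt (fun t => (η t i - p i.castSucc) ^ 2)
        (2 * ((η t i - p i.castSucc) * (-(Gv p (η t) i)))) t := by
      intro i
      have h1 := (hcoordd i t ht).sub_const (p i.castSucc)
      have h2 := h1.pow 2
      refine h2.congr_deriv (Eq.symm ?_)
      simp only [Nat.cast_ofNat, pow_one]
      ring
    have h := HasDerivAt.fun_sum (fun i (_ : i ∈ Finset.univ) => hterm i)
    refine h.congr_deriv (Eq.symm ?_)
    rw [Finset.mul_sum]
    exact Finset.sum_congr rfl fun i _ => by ring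
  -- segment bounds along the flow
  have hseg : ∀ t ≥ (0:ℝ),
      (Lstar p (η t) + ∑ i, (η t i - p i.castSucc) ^ 2
          ≤ ∑ i, (η t i - p i.castSucc) * Gv p (η t) i)
      ∧ (∑ i, (η t i - p i.castSucc) ^ 2 ≤ Lstar p (η t)) :=
    fun t ht => segment_bounds hp (hmem t ht)
  have hρ_nonneg : ∀ t, 0 ≤ ∑ i, (η t i - p i.castSucc) ^ 2 :=
    fun t => Finset.sum_nonneg fun i _ => sq_nonneg _
  have hg_nonneg : ∀ t ≥ (0:ℝ), 0 ≤ Lstar p (η t) :=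
    fun t ht => le_trans (hρ_nonneg t) ((hseg t ht).2)
  have hPL : ∀ t ≥ (0:ℝ), 4 * Lstar p (η t) ≤ ∑ i, (Gv p (η t) i) ^ 2 :=
    fun t ht => PL_bound hp (hmem t ht)
  -- upper Grönwall for the loss
  have hgup : ∀ t ≥ (0:ℝ), Lstar p (η t) ≤ Lstar p (η 0) * Real.exp (-(4 * t)) := by
    have h := gronwall_up (f := fun t => Lstar p (η t))
      (f' := fun t => -(∑ i, (Gv p (η t) i) ^ 2)) (a := 4) hgd
      (fun t ht => by have := hPL t ht; simp only; linarith)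
    intro t ht
    exact h t ht
  -- decay of ρ
  have hρup : ∀ t ≥ (0:ℝ), (∑ i, (η t i - p i.castSucc) ^ 2)
      ≤ (∑ i, (η 0 i - p i.castSucc) ^ 2) * Real.exp (-(2 * t)) := by
    have h := gronwall_up (f := fun t => ∑ i, (η t i - p i.castSucc) ^ 2)
      (f' := fun t => -2 * ∑ i, (η t i - p i.castSucc) * Gv p (η t) i) (a := 2) hρd
      (fun t ht => by
        have h1 := (hseg t ht).1
        have h2 := hg_nonneg t ht
        simp only
        linarith)
    intro t ht
    exact h t ht
  -- the minimum coordinate of p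
  set β : ℝ := Finset.univ.inf' Finset.univ_nonempty p with hβ_def
  have hβpos : 0 < β := by
    rw [hβ_def, Finset.lt_inf'_iff]
    exact fun j _ => hp.1 j
  have hβle : ∀ j, β ≤ p j := fun j => Finset.inf'_le _ (Finset.mem_univ j)
  -- find T beyond which ρ is below the threshold
  have hthr : 0 < β ^ 2 / (4 * (n:ℝ)) := by positivity
  have htend : Tendsto (fun t : ℝ => (∑ i, (η 0 i - p i.castSucc) ^ 2) * Real.exp (-(2 * t)))
      atTop (nhds 0) := by
    have h1 : Tendsto (fun t : ℝ => -(2 * t)) atTop atBot := by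
      apply Filter.tendsto_neg_atBot_iff.mpr
      exact Tendsto.const_mul_atTop (by norm_num) tendsto_id
    have h2 : Tendsto (fun t : ℝ => Real.exp (-(2 * t))) atTop (nhds 0) :=
      Real.tendsto_exp_atBot.comp h1
    have h3 := h2.const_mul (∑ i, (η 0 i - p i.castSucc) ^ 2)
    simpa using h3
  obtain ⟨T, hTlt, hT0⟩ : ∃ T, (∑ i, (η 0 i - p i.castSucc) ^ 2) * Real.exp (-(2 * T))
      < β ^ 2 / (4 * (n:ℝ)) ∧ 0 ≤ T := by
    have h := (htend.eventually_lt_const hthr).and (eventually_ge_atTop (0:ℝ))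
    exact h.exists
  have hρT : ∀ t ≥ T, 0 ≤ t → (∑ i, (η t i - p i.castSucc) ^ 2) ≤ β ^ 2 / (4 * (n:ℝ)) := by
    intro t htT ht0
    have h1 := hρup t ht0
    have h2 : Real.exp (-(2 * t)) ≤ Real.exp (-(2 * T)) := by
      apply Real.exp_le_exp.2
      linarith
    have h3 : (∑ i, (η 0 i - p i.castSucc) ^ 2) * Real.exp (-(2 * t))
        ≤ (∑ i, (η 0 i - p i.castSucc) ^ 2) * Real.exp (-(2 * T)) :=
      mul_le_mul_of_nonneg_left h2 (hρ_nonneg 0)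
    linarith
  -- minima of the coordinates on [0, T]
  have hIccC : IsCompact (Set.Icc (0:ℝ) T) := isCompact_Icc
  have hIccNe : (Set.Icc (0:ℝ) T).Nonempty := Set.nonempty_Icc.2 hT0
  have hconti : ∀ i : Fin n, ContinuousOn (fun t => η t i) (Set.Icc 0 T) :=
    fun i t ht => ((hcoordd i t ht.1).continuousAt).continuousWithinAt
  have hcontl : ContinuousOn (fun t => 1 - ∑ j, η t j) (Set.Icc 0 T) := by
    intro t ht
    have h := (HasDerivAt.fun_sum (fun j (_ : j ∈ Finset.univ) => hcoordd j t ht.1)).const_sub 1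
    exact (h.continuousAt).continuousWithinAt
  choose ti hti htimin using fun i : Fin n => hIccC.exists_isMinOn hIccNe (hconti i)
  obtain ⟨tl, htl, htlmin⟩ := hIccC.exists_isMinOn hIccNe hcontl
  set εa : ℝ := Finset.univ.inf' Finset.univ_nonempty (fun i => η (ti i) i) with hεa_def
  have hεapos : 0 < εa := by
    rw [hεa_def, Finset.lt_inf'_iff]
    exact fun i _ => (hmem (ti i) (hti i).1).1 i
  set εb : ℝ := 1 - ∑ j, η tl j with hεb_def
  have hεbpos : 0 < εb := by
    rw [hεb_def]
    have := (hmem tl htl.1).2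
    linarith
  set ε : ℝ := min (min εa εb) (β / 2) with hε_def
  have hεpos : 0 < ε := lt_min (lt_min hεapos hεbpos) (by linarith)
  have hεβ : ε ≤ β / 2 := min_le_right _ _
  -- uniform coordinate bounds along the flow
  have hsq_le : ∀ (a b : ℝ), 0 ≤ b → a ^ 2 ≤ b ^ 2 → |a| ≤ b := by
    intro a b hb h
    have h1 := Real.sqrt_le_sqrt h
    rwa [Real.sqrt_sq_eq_abs, Real.sqrt_sq hb] at h1
  have hbound1 : ∀ t ≥ (0:ℝ), ∀ i, ε ≤ η t i := by
    intro t ht i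
    rcases le_total t T with hle | hge
    · have h1 : η (ti i) i ≤ η t i := htimin i ⟨ht, hle⟩
      have h2 : εa ≤ η (ti i) i := Finset.inf'_le _ (Finset.mem_univ i)
      have h3 : ε ≤ εa := le_trans (min_le_left _ _) (min_le_left _ _)
      linarith
    · have h1 := hρT t hge ht
      have h2 : (η t i - p i.castSucc) ^ 2 ≤ β ^ 2 / (4 * (n:ℝ)) := by
        refine le_trans ?_ h1
        exact Finset.single_le_sum (f := fun j => (η t j - p j.castSucc) ^ 2)
          (fun j _ => sq_nonneg _) (Finset.mem_univ i)
      have h3 : (η t i - p i.castSucc) ^ 2 ≤ (β / 2) ^ 2 := by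
        refine h2.trans ?_
        rw [div_pow]
        rw [div_le_div_iff₀ (by positivity) (by norm_num)]
        nlinarith [sq_nonneg β]
      have h4 : |η t i - p i.castSucc| ≤ β / 2 := hsq_le _ _ (by linarith) h3
      have h5 := hβle i.castSucc
      have h6 := abs_le.1 h4
      linarith [h6.1]
  have hbound2 : ∀ t ≥ (0:ℝ), ε ≤ 1 - ∑ j, η t j := by
    intro t ht
    rcases le_total t T with hle | hge
    · have h1 : 1 - ∑ j, η tl j ≤ 1 - ∑ j, η t j := htlmin ⟨ht, hle⟩
      have h3 : ε ≤ εb := le_trans (min_le_left _ _) (min_le_right _ _)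
      rw [hεb_def] at h3
      linarith
    · have h1 := hρT t hge ht
      have h2 : (∑ j, (η t j - p j.castSucc)) ^ 2 ≤ (n:ℝ) * ∑ j, (η t j - p j.castSucc) ^ 2 := by
        have := sq_sum_le_card_mul_sum_sq (s := Finset.univ)
          (f := fun j => η t j - p j.castSucc)
        simpa using this
      have h3 : (∑ j, (η t j - p j.castSucc)) ^ 2 ≤ (β / 2) ^ 2 := by
        have h4 : (n:ℝ) * (∑ j, (η t j - p j.castSucc) ^ 2) ≤ (n:ℝ) * (β ^ 2 / (4 * (n:ℝ))) :=
          mul_le_mul_of_nonneg_left h1 (by positivity)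
        have h5 : (n:ℝ) * (β ^ 2 / (4 * (n:ℝ))) = β ^ 2 / 4 := by
          field_simp
        rw [div_pow]
        nlinarith
      have h4 : |∑ j, (η t j - p j.castSucc)| ≤ β / 2 := hsq_le _ _ (by linarith) h3
      have h5 : ∑ j, (η t j - p j.castSucc) = (∑ j, η t j) - (1 - p (Fin.last n)) := by
        rw [Finset.sum_sub_distrib, sum_eta hp]
      have h6 := hβle (Fin.last n)
      have h7 := abs_le.1 h4
      rw [h5] at h7
      linarith [h7.2]
  have hbound3 : ∀ j, ε ≤ p j := fun j => le_trans (le_trans hεβ (by linarith)) (hβle j)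
  -- smoothness constant
  have hG2K : ∀ t ≥ (0:ℝ), (∑ i, (Gv p (η t) i) ^ 2)
      ≤ (2 * (1 + (n:ℝ) ^ 2) / ε ^ 2) * ∑ i, (η t i - p i.castSucc) ^ 2 :=
    fun t ht => grad_sq_le hp hεpos (hbound1 t ht) (hbound2 t ht) hbound3
  set K₁ : ℝ := 2 * (1 + (n:ℝ) ^ 2) / ε ^ 2 with hK₁_def
  have hK₁pos : 0 < K₁ := by rw [hK₁_def]; positivity
  set K : ℝ := max 4 K₁ with hK_def
  have hK4 : (4:ℝ) ≤ K := le_max_left _ _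
  have hK₁K : K₁ ≤ K := le_max_right _ _
  -- lower Grönwall
  have hglow : ∀ t ≥ (0:ℝ), Lstar p (η 0) * Real.exp (-(K * t)) ≤ Lstar p (η t) := by
    have h := gronwall_down (f := fun t => Lstar p (η t))
      (f' := fun t => -(∑ i, (Gv p (η t) i) ^ 2)) (a := K) hgd
      (fun t ht => by
        have h1 := hG2K t ht
        have h2 : K₁ * (∑ i, (η t i - p i.castSucc) ^ 2) ≤ K₁ * Lstar p (η t) :=
          mul_le_mul_of_nonneg_left ((hseg t ht).2) hK₁pos.le
        have h3 : K₁ * Lstar p (η t) ≤ K * Lstar p (η t) :=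
          mul_le_mul_of_nonneg_right hK₁K (hg_nonneg t ht)
        simp only
        rw [hK₁_def] at h2
        linarith)
    intro t ht
    exact h t ht
  -- initial value
  have hg0 : Lstar p (η 0) = KL q₀ p := by
    rw [hη0]
    unfold Lstar
    rw [mixDist_etaCoord hq₀]
  have hc : 0 < Lstar p (η 0) := by
    rw [hg0]
    exact KL_pos hq₀ hp hne
  refine ⟨2, K / 2, Lstar p (η 0), by norm_num, by linarith, hc, ?_⟩
  intro t ht
  refine ⟨?_, ?_, ?_⟩
  · have h := hglow t ht
    have harg : (-2 : ℝ) * (K / 2) * t = -(K * t) := by ring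
    rw [harg]
    exact h
  · have h := hgup t ht
    have harg : (-2 : ℝ) * 2 * t = -(4 * t) := by ring
    rw [harg]
    exact h
  · apply mul_le_mul_of_nonneg_left _ hc.le
    apply Real.exp_le_exp.2
    nlinarith

end
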